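/- Let P be a d-dimensional perfect prismatoid in ℝ^d whose vertices v_1, ..., v_k all lie in ℤ^d, described (as in the Proposition) by inequalities c_i ≤ ⟨a_i, x⟩ ≤ b_i, i = 1, ..., N, with c_i < b_i and with every vertex v of P satisfying ⟨a_i, v⟩ ∈ {b_i, c_i} for each i. Let Λ(P) = {n_1 v_1 + ... + n_k v_k : n_j ∈ ℤ, Σ n_j = 1} and Q(x) = Σ_{i=1}^{N} (⟨a_i, x⟩ − b_i)(⟨a_i, x⟩ − c_i). Then Q(u) ≥ 0 for every u ∈ Λ(P), and for u ∈ Λ(P) one has Q(u) = 0 if and only if u is a vertex of P. -/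

import Mathlib

open scoped RealInnerProductSpace

/-- A polytope is the convex hull of a finite set of points. -/
def IsPolytope {d : ℕ} (P : Set (EuclideanSpace ℝ (Fin d))) : Prop :=
  ∃ S : Finset (EuclideanSpace ℝ (Fin d)),
    P = convexHull ℝ (S : Set (EuclideanSpace ℝ (Fin d)))

/-- A facet of a `d`-dimensional polytope is a `(d-1)`-dimensional exposed face. -/
def IsFacet {d : ℕ} (P F : Set (EuclideanSpace ℝ (Fin d))) : Prop :=
  IsExposed ℝ P F ∧ Module.finrank ℝ (vectorSpan ℝ F) = d - 1

/-- A `d`-dimensional polytope `P` in `ℝ^d` is a perfect prismatoid if for every facet `F`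
there is a (nonempty exposed) face `F'` parallel to `F` (i.e. `lin F' ⊆ lin F`) such that
`P = conv (F ∪ F')`. -/
def IsPerfectPrismatoid {d : ℕ} (P : Set (EuclideanSpace ℝ (Fin d))) : Prop :=
  IsPolytope P ∧ affineSpan ℝ P = ⊤ ∧
  ∀ F : Set (EuclideanSpace ℝ (Fin d)), IsFacet P F →
    ∃ F' : Set (EuclideanSpace ℝ (Fin d)), IsExposed ℝ P F' ∧ F'.Nonempty ∧
      vectorSpan ℝ F' ≤ vectorSpan ℝ F ∧ P = convexHull ℝ (F ∪ F')

/-- The set of integer affine combinations of the points `v 0, ..., v (k-1)`: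
integer linear combinations whose coefficients sum to `1`. -/
def intAffineCombos {d k : ℕ} (v : Fin k → EuclideanSpace ℝ (Fin d)) :
    Set (EuclideanSpace ℝ (Fin d)) :=
  {u | ∃ n : Fin k → ℤ, (∑ j, n j) = 1 ∧ u = ∑ j, (n j : ℝ) • v j}

/-- Let `P` be a perfect prismatoid with integer vertices `v 1, ..., v k`,
described by `c i ≤ ⟪a i, x⟫ ≤ b i` with `c i < b i` and every vertex value in `{b i, c i}`.
Then `Q u = ∑ i, (⟪a i, u⟫ - b i) * (⟪a i, u⟫ - c i)` is nonnegative on the lattice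
`Λ(P)` of integer affine combinations of the vertices, and vanishes there exactly at the
vertices of `P`. -/
theorem Q_nonneg_on_lattice_and_zero_iff_vertex {d N k : ℕ}
    (P : Set (EuclideanSpace ℝ (Fin d))) (hP : IsPerfectPrismatoid P)
    (v : Fin k → EuclideanSpace ℝ (Fin d))
    (hvint : ∀ j i, ∃ m : ℤ, v j i = (m : ℝ))
    (hvP : Set.range v = Set.extremePoints ℝ P)
    (a : Fin N → EuclideanSpace ℝ (Fin d)) (b c : Fin N → ℝ)
    (hcb : ∀ i, c i < b i)
    (hdesc : P = {x | ∀ i, c i ≤ ⟪a i, x⟫ ∧ ⟪a i, x⟫ ≤ b i})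
    (hvert : ∀ w ∈ Set.extremePoints ℝ P, ∀ i, ⟪a i, w⟫ = b i ∨ ⟪a i, w⟫ = c i) :
    ∀ u ∈ intAffineCombos v,
      0 ≤ ∑ i, (⟪a i, u⟫ - b i) * (⟪a i, u⟫ - c i) ∧
      ((∑ i, (⟪a i, u⟫ - b i) * (⟪a i, u⟫ - c i)) = 0 ↔ u ∈ Set.extremePoints ℝ P) := by
    classical
  obtain ⟨hPoly, hspan, _⟩ := hP
  -- `P` is nonempty
  have hPne : P.Nonempty := by
    rw [← affineSpan_nonempty (k := ℝ), hspan]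
    exact ⟨0, trivial⟩
  -- `P` is bounded
  obtain ⟨S, hS⟩ := hPoly
  have hb : Bornology.IsBounded P := by
    rw [hS]
    exact (S.finite_toSet.isCompact_convexHull (𝕜 := ℝ)).isBounded
  obtain ⟨C, hC⟩ := isBounded_iff_forall_norm_le.mp hb
  -- the `a i` separate points: a vector orthogonal to all of them is zero
  have hinj : ∀ w : EuclideanSpace ℝ (Fin d), (∀ i, ⟪a i, w⟫ = 0) → w = 0 := by
    intro w hw
    by_contra hwne
    obtain ⟨p, hp⟩ := hPne
    have hC0 : ‖p‖ ≤ C := hC p hp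
    have hwpos : 0 < ‖w‖ := norm_pos_iff.mpr hwne
    set t : ℝ := (C + ‖p‖ + 1) / ‖w‖ with htdef
    have htnn : 0 ≤ t := div_nonneg (by linarith [norm_nonneg p]) hwpos.le
    have hmem : p + t • w ∈ P := by
      rw [hdesc] at hp ⊢
      intro i
      have h : ⟪a i, p + t • w⟫ = ⟪a i, p⟫ := by
        rw [inner_add_right, real_inner_smul_right, hw i]; ring
      rw [h]; exact hp i
    have h1 : ‖p + t • w‖ ≤ C := hC _ hmem
    have h2 : ‖t • w‖ ≤ ‖p + t • w‖ + ‖p‖ := by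
      calc ‖t • w‖ = ‖(p + t • w) - p‖ := by rw [add_sub_cancel_left]
        _ ≤ ‖p + t • w‖ + ‖p‖ := norm_sub_le _ _
    have h3 : ‖t • w‖ = C + ‖p‖ + 1 := by
      rw [norm_smul, Real.norm_eq_abs, abs_of_nonneg htnn, htdef,
        div_mul_cancel₀ _ (ne_of_gt hwpos)]
    linarith
  -- any point attaining `b i` or `c i` for every `i` is an extreme point
  have hext : ∀ u : EuclideanSpace ℝ (Fin d),
      (∀ i, ⟪a i, u⟫ = b i ∨ ⟪a i, u⟫ = c i) → u ∈ Set.extremePoints ℝ P := by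
    intro u hu
    have huP : u ∈ P := by
      rw [hdesc]
      intro i
      rcases hu i with h | h
      · exact ⟨h ▸ (hcb i).le, h.le⟩
      · exact ⟨h.ge, h ▸ (hcb i).le⟩
    refine ⟨huP, ?_⟩
    intro x₁ hx₁ x₂ hx₂ hseg
    obtain ⟨s, t, hs, ht, hst, hcomb⟩ := hseg
    have hX1 : ∀ i, c i ≤ ⟪a i, x₁⟫ ∧ ⟪a i, x₁⟫ ≤ b i := by rw [hdesc] at hx₁; exact hx₁
    have hX2 : ∀ i, c i ≤ ⟪a i, x₂⟫ ∧ ⟪a i, x₂⟫ ≤ b i := by rw [hdesc] at hx₂; exact hx₂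
    have key : ∀ i, ⟪a i, x₁⟫ = ⟪a i, u⟫ ∧ ⟪a i, x₂⟫ = ⟪a i, u⟫ := by
      intro i
      have hquick : ⟪a i, u⟫ = s * ⟪a i, x₁⟫ + t * ⟪a i, x₂⟫ := by
        rw [← hcomb, inner_add_right, real_inner_smul_right, real_inner_smul_right]
      obtain ⟨hc1, hb1⟩ := hX1 i
      obtain ⟨hc2, hb2⟩ := hX2 i
      have hb' : s * b i + t * b i = b i := by rw [← add_mul, hst, one_mul]
      have hc' : s * c i + t * c i = c i := by rw [← add_mul, hst, one_mul]
      rcases hu i with h | h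
      · rw [h] at hquick ⊢
        have e1 : b i ≤ ⟪a i, x₁⟫ := by
          nlinarith [mul_nonneg ht.le (sub_nonneg.mpr hb2), hb', hs]
        have e2 : b i ≤ ⟪a i, x₂⟫ := by
          nlinarith [mul_nonneg hs.le (sub_nonneg.mpr hb1), hb', ht]
        exact ⟨le_antisymm hb1 e1, le_antisymm hb2 e2⟩
      · rw [h] at hquick ⊢
        have e1 : ⟪a i, x₁⟫ ≤ c i := by
          nlinarith [mul_nonneg ht.le (sub_nonneg.mpr hc2), hc', hs]
        have e2 : ⟪a i, x₂⟫ ≤ c i := by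
          nlinarith [mul_nonneg hs.le (sub_nonneg.mpr hc1), hc', ht]
        exact ⟨le_antisymm e1 hc1, le_antisymm e2 hc2⟩
    · have : x₁ - u = 0 := by
        apply hinj
        intro i
        rw [inner_sub_right, (key i).1, sub_self]
      exact sub_eq_zero.mp this
  -- main argument
  intro u hu
  obtain ⟨n, hn1, hnu⟩ := hu
  have hval : ∀ i, ∃ m : ℤ, ⟪a i, u⟫ = c i + (m : ℝ) * (b i - c i) := by
    intro i
    refine ⟨∑ j, if ⟪a i, v j⟫ = b i then n j else 0, ?_⟩
    have step : ⟪a i, u⟫ = ∑ j, (n j : ℝ) * ⟪a i, v j⟫ := by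
      rw [hnu, inner_sum]
      exact Finset.sum_congr rfl fun j _ => real_inner_smul_right _ _ _
    rw [step]
    have step2 : ∀ j, (n j : ℝ) * ⟪a i, v j⟫ =
        (n j : ℝ) * c i + (if ⟪a i, v j⟫ = b i then (n j : ℝ) else 0) * (b i - c i) := by
      intro j
      by_cases h : ⟪a i, v j⟫ = b i
      · rw [if_pos h, h]; ring
      · rw [if_neg h]
        have hvj : v j ∈ Set.extremePoints ℝ P := by
          rw [← hvP]; exact Set.mem_range_self j
        rcases hvert (v j) hvj i with h' | h'
        · exact absurd h' h
        · rw [h']; ring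
    rw [Finset.sum_congr rfl fun j _ => step2 j, Finset.sum_add_distrib,
      ← Finset.sum_mul, ← Finset.sum_mul]
    have c1 : (∑ j, (n j : ℝ)) = 1 := by
      rw [← Int.cast_sum, hn1, Int.cast_one]
    have c2 : (∑ j, (if ⟪a i, v j⟫ = b i then (n j : ℝ) else 0)) =
        ((∑ j, if ⟪a i, v j⟫ = b i then n j else 0 : ℤ) : ℝ) := by
      rw [Int.cast_sum]
      exact Finset.sum_congr rfl fun j _ => by split <;> simp
    rw [c1, c2, one_mul]
  have hterm : ∀ i, 0 ≤ (⟪a i, u⟫ - b i) * (⟪a i, u⟫ - c i) := by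
    intro i
    obtain ⟨m, hm⟩ := hval i
    rw [hm]
    have h1 : (c i + (m : ℝ) * (b i - c i) - b i) * (c i + (m : ℝ) * (b i - c i) - c i)
        = ((m : ℝ) * ((m : ℝ) - 1)) * (b i - c i) ^ 2 := by ring
    rw [h1]
    have h2 : (0 : ℝ) ≤ (m : ℝ) * ((m : ℝ) - 1) := by
      have : (0 : ℤ) ≤ m * (m - 1) := by
        rcases le_or_gt m 0 with h | h
        · nlinarith
        · nlinarith
      calc (0 : ℝ) = ((0 : ℤ) : ℝ) := by norm_num
        _ ≤ ((m * (m - 1) : ℤ) : ℝ) := by exact_mod_cast this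
        _ = (m : ℝ) * ((m : ℝ) - 1) := by push_cast; ring
    exact mul_nonneg h2 (sq_nonneg _)
  refine ⟨Finset.sum_nonneg fun i _ => hterm i, ?_, ?_⟩
  · intro hzero
    have hz := (Finset.sum_eq_zero_iff_of_nonneg fun i _ => hterm i).mp hzero
    apply hext
    intro i
    rcases mul_eq_zero.mp (hz i (Finset.mem_univ i)) with h | h
    · left; linarith [sub_eq_zero.mp h]
    · right; linarith [sub_eq_zero.mp h]
  · intro huext
    apply Finset.sum_eq_zero
    intro i _
    rcases hvert u huext i with h | h <;> rw [h] <;> ring
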